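/- Let a < b be real numbers and let f : ℝ → ℝ be differentiable on [a,b] with f(a) < 0 and f'(t) ≤ -f(t)²/4 for all t ∈ [a,b]. Then b < a + 4/(-f(a)). (Hence a solution of the Raychaudhuri inequality with negative expansion at a point cannot be continued for proper time 4/|f(a)| to the future: the expansion must blow up to -∞ before then.) -/
import Mathlib


/-- Raychaudhuri comparison: a solution of `f' ≤ -f²/4` with `f a < 0` must blow up
to `-∞` before proper time `4/(-f a)` to the future of `a`. -/
theorem raychaudhuri_blowup_future
    (a b : ℝ) (hab : a < b) (f f' : ℝ → ℝ)
    (hderiv : ∀ t ∈ Set.Icc a b, HasDerivAt f (f' t) t)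
    (hfa : f a < 0)
    (hineq : ∀ t ∈ Set.Icc a b, f' t ≤ -(f t) ^ 2 / 4) :
    b < a + 4 / (-f a) := by
  -- f is antitone on [a,b] since f' ≤ 0
  have hcont : ContinuousOn f (Set.Icc a b) := fun t ht =>
    (hderiv t ht).continuousAt.continuousWithinAt
  have hanti : AntitoneOn f (Set.Icc a b) := by
    apply antitoneOn_of_deriv_nonpos (convex_Icc a b) hcont
    · intro t ht
      rw [interior_Icc] at ht
      exact ((hderiv t (Set.mem_Icc_of_Ioo ht)).differentiableAt).differentiableWithinAt
    · intro t ht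
      rw [interior_Icc] at ht
      have ht' := Set.mem_Icc_of_Ioo ht
      rw [(hderiv t ht').deriv]
      have := hineq t ht'
      nlinarith [sq_nonneg (f t)]
  have hneg : ∀ t ∈ Set.Icc a b, f t < 0 := fun t ht =>
    lt_of_le_of_lt (hanti (Set.left_mem_Icc.2 hab.le) ht ht.1) hfa
  -- g = 1/f - t/4 is monotone on [a,b]
  set g : ℝ → ℝ := fun t => (f t)⁻¹ - t / 4 with hg
  have hgderiv : ∀ t ∈ Set.Icc a b, HasDerivAt g (-f' t / (f t) ^ 2 - 1 / 4) t := by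
    intro t ht
    exact ((hderiv t ht).inv (hneg t ht).ne).sub
      ((hasDerivAt_id t).div_const 4)
  have hmono : MonotoneOn g (Set.Icc a b) := by
    apply monotoneOn_of_deriv_nonneg (convex_Icc a b)
      (fun t ht => (hgderiv t ht).continuousAt.continuousWithinAt)
    · intro t ht
      rw [interior_Icc] at ht
      exact (hgderiv t (Set.mem_Icc_of_Ioo ht)).differentiableAt.differentiableWithinAt
    · intro t ht
      rw [interior_Icc] at ht
      have ht' := Set.mem_Icc_of_Ioo ht
      rw [(hgderiv t ht').deriv]
      have h1 := hineq t ht'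
      have h2 : (0:ℝ) < (f t) ^ 2 := pow_pos (neg_pos.2 (hneg t ht')) 2 |>.trans_eq (by ring)
      rw [sub_nonneg, le_div_iff₀ h2]
      nlinarith
  have key := hmono (Set.left_mem_Icc.2 hab.le) (Set.right_mem_Icc.2 hab.le) hab.le
  have hfb : (f b)⁻¹ < 0 := inv_neg''.2 (hneg b (Set.right_mem_Icc.2 hab.le))
  have hainv : (f a)⁻¹ < 0 := inv_neg''.2 hfa
  have hx : f a * (f a)⁻¹ = 1 := mul_inv_cancel₀ hfa.ne
  have h4 : 4 / (-f a) = -4 * (f a)⁻¹ := by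
    rw [div_eq_mul_inv, inv_neg]; ring
  rw [h4]
  simp only [hg] at key
  nlinarith
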